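/- Let X, Y be finite simple graphs with n = |V(Y)| ≥ 1, and let p = (p_x, p_y), q = (q_x, q_y) span an outer edge of Z = X[Y]. Then the number of vertices r of Z non-adjacent to both p and q (and distinct from p and q) equals |N_{X̄}(p_x) ∩ N_{X̄}(q_x)|·n, where X̄ denotes the complement of X. -/

import Mathlib

/-- The lexicographic product of two simple graphs. -/
def lexProd {V W : Type*} (X : SimpleGraph V) (Y : SimpleGraph W) : SimpleGraph (V × W) where
  Adj p q := X.Adj p.1 q.1 ∨ (p.1 = q.1 ∧ Y.Adj p.2 q.2)
  symm := by
    constructor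
    rintro p q (h | ⟨h1, h2⟩)
    · exact Or.inl h.symm
    · exact Or.inr ⟨h1.symm, h2.symm⟩
  loopless := by
    constructor
    rintro p (h | ⟨h1, h2⟩)
    · exact X.irrefl h
    · exact Y.irrefl h2

lemma ncard_prod' {α β : Type*} (s : Set α) (t : Set β) :
    (s ×ˢ t).ncard = s.ncard * t.ncard := by
  have : Nat.card ↥(s ×ˢ t) = Nat.card (↥s × ↥t) := Nat.card_congr (Equiv.Set.prod s t)
  simpa [Nat.card_coe_set_eq, Nat.card_prod] using this

/-- Common-non-neighbour count for an outer edge of `X[Y]`: if `p = (p_x, p_y)` and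
`q = (q_x, q_y)` span an outer edge, then the number of vertices distinct from `p` and `q`
and non-adjacent to both is `|N_{X̄}(p_x) ∩ N_{X̄}(q_x)| · n`, where `n = |V(Y)| ≥ 1` and
`X̄` is the complement of `X`. -/
theorem outer_edge_common_non_neighbours {V W : Type*} [Fintype V] [Fintype W] [Nonempty W]
    (X : SimpleGraph V) (Y : SimpleGraph W) (px qx : V) (py qy : W) (h : X.Adj px qx) :
    {r : V × W | r ≠ (px, py) ∧ r ≠ (qx, qy) ∧
        ¬ (lexProd X Y).Adj r (px, py) ∧ ¬ (lexProd X Y).Adj r (qx, qy)}.ncard =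
      ((Xᶜ).neighborSet px ∩ (Xᶜ).neighborSet qx).ncard * Fintype.card W := by
  have hne : px ≠ qx := X.ne_of_adj h
  have hset : {r : V × W | r ≠ (px, py) ∧ r ≠ (qx, qy) ∧
        ¬ (lexProd X Y).Adj r (px, py) ∧ ¬ (lexProd X Y).Adj r (qx, qy)} =
      ((Xᶜ).neighborSet px ∩ (Xᶜ).neighborSet qx) ×ˢ (Set.univ : Set W) := by
    ext ⟨a, b⟩
    simp only [Set.mem_setOf_eq, Set.mem_prod, Set.mem_inter_iff, SimpleGraph.mem_neighborSet,
      SimpleGraph.compl_adj, lexProd, Set.mem_univ, and_true, Prod.mk.injEq, not_or, not_and]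
    constructor
    · rintro ⟨h1, h2, ⟨hp1, hp2⟩, ⟨hq1, hq2⟩⟩
      exact ⟨⟨fun hab => hq1 (hab ▸ h), fun had => hp1 had.symm⟩,
        ⟨fun hab => hp1 (hab ▸ h.symm), fun had => hq1 had.symm⟩⟩
    · rintro ⟨⟨ha1, ha2⟩, ⟨hb1, hb2⟩⟩
      exact ⟨fun hab => ha1 ((Prod.ext_iff.1 hab).1).symm, fun hab => hb1 ((Prod.ext_iff.1 hab).1).symm,
        ⟨fun had => ha2 had.symm, fun hab => absurd hab.symm ha1⟩,
        ⟨fun had => hb2 had.symm, fun hab => absurd hab.symm hb1⟩⟩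
  rw [hset, ncard_prod', Set.ncard_univ, Nat.card_eq_fintype_card]
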